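/- Let 2 ≤ d1 < d2 and let C be a Hermitian matrix on ℂ^{d1}⊗ℂ^{d2} whose eigenvalues in decreasing order have the form (λ1, λ, λ, …, λ, λ_{d1d2}), i.e. λ2 = λ3 = … = λ_{d1d2−1}. Then λ(tr_1[C]) ⊕ λ(tr_2[C]) ≺ λ(tr_1[Λ]) ⊕ λ(tr_2[Λ]), where Λ is the diagonal matrix on ℂ^{d1}⊗ℂ^{d2} whose diagonal lists the eigenvalues of C in decreasing order (with respect to the lexicographic index ordering). -/

import Mathlib

open Matrix Finset Kronecker
open scoped ComplexOrder

/-- The first partial trace of a matrix on `ℂ^{d1} ⊗ ℂ^{d2}` (index pairs `(i,s)` ordered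
lexicographically): `(tr_1 C)_{s,t} = ∑_i C_{(i,s),(i,t)}`. -/
noncomputable def ptrace1 {d1 d2 : ℕ} (C : Matrix (Fin d1 × Fin d2) (Fin d1 × Fin d2) ℂ) :
    Matrix (Fin d2) (Fin d2) ℂ :=
  Matrix.of fun s t => ∑ i : Fin d1, C (i, s) (i, t)

/-- The second partial trace: `(tr_2 C)_{i,j} = ∑_s C_{(i,s),(j,s)}`. -/
noncomputable def ptrace2 {d1 d2 : ℕ} (C : Matrix (Fin d1 × Fin d2) (Fin d1 × Fin d2) ℂ) :
    Matrix (Fin d1) (Fin d1) ℂ :=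
  Matrix.of fun i j => ∑ s : Fin d2, C (i, s) (j, s)

/-- The sum of the `k` largest entries of the vector `x` (the largest value of a sum of `k`
entries of `x`), i.e. `∑_{i=1}^k x_i^↓`. -/
noncomputable def maxSum {ι : Type*} [Fintype ι] (x : ι → ℝ) (k : ℕ) : ℝ :=
  sSup {s : ℝ | ∃ A : Finset ι, A.card = k ∧ s = ∑ i ∈ A, x i}

/-- `x ≺ y` (majorization): for every `k`, the sum of the `k` largest entries of `x` is at
most the sum of the `k` largest entries of `y`, and the total sums are equal. -/
def Majorizes {ι κ : Type*} [Fintype ι] [Fintype κ] (x : ι → ℝ) (y : κ → ℝ) : Prop :=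
  (∀ k : ℕ, maxSum x k ≤ maxSum y k) ∧ ∑ i, x i = ∑ j, y j

/-- `x ≺_w y` (weak majorization). -/
def WeakMajorizes {ι κ : Type*} [Fintype ι] [Fintype κ] (x : ι → ℝ) (y : κ → ℝ) : Prop :=
  ∀ k : ℕ, maxSum x k ≤ maxSum y k

/- Auxiliary lemmas -/

open scoped InnerProductSpace

section MaxSumLemmas

variable {ι : Type*} [Fintype ι] (x : ι → ℝ)

lemma maxSum_bddAbove (k : ℕ) :
    BddAbove {s : ℝ | ∃ A : Finset ι, A.card = k ∧ s = ∑ i ∈ A, x i} := by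
  apply Set.Finite.bddAbove
  apply (Set.finite_range (fun A : Finset ι => ∑ i ∈ A, x i)).subset
  rintro r ⟨A, -, rfl⟩
  exact ⟨A, rfl⟩

lemma le_maxSum (A : Finset ι) : ∑ i ∈ A, x i ≤ maxSum x A.card :=
  le_csSup (maxSum_bddAbove x A.card) ⟨A, rfl, rfl⟩

lemma maxSum_le {k : ℕ} (hk : k ≤ Fintype.card ι) {M : ℝ}
    (h : ∀ A : Finset ι, A.card = k → ∑ i ∈ A, x i ≤ M) : maxSum x k ≤ M := by
  obtain ⟨A, -, hA⟩ := Finset.exists_subset_card_eq (s := (Finset.univ : Finset ι)) (n := k)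
    (by simpa using hk)
  exact csSup_le ⟨∑ i ∈ A, x i, ⟨A, hA, rfl⟩⟩ (by rintro r ⟨B, hB, rfl⟩; exact h B hB)

lemma maxSum_of_card_lt {k : ℕ} (hk : Fintype.card ι < k) : maxSum x k = 0 := by
  have : {s : ℝ | ∃ A : Finset ι, A.card = k ∧ s = ∑ i ∈ A, x i} = ∅ := by
    ext r
    simp only [Set.mem_setOf_eq, Set.mem_empty_iff_false, iff_false, not_exists]
    rintro A ⟨hA, -⟩
    have h2 : A.card ≤ Fintype.card ι := Finset.card_le_univ A
    omega
  rw [maxSum, this, Real.sSup_empty]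

end MaxSumLemmas


lemma inner_toEuclideanLin_expand {m : Type*} [Fintype m] [DecidableEq m]
    {A : Matrix m m ℂ} (hA : A.IsHermitian) (v : EuclideanSpace ℂ m) :
    ⟪v, Matrix.toEuclideanLin A v⟫_ℂ
      = ∑ k, (hA.eigenvalues k : ℂ) * (Complex.normSq ⟪hA.eigenvectorBasis k, v⟫_ℂ : ℝ) := by
  rw [← OrthonormalBasis.sum_inner_mul_inner hA.eigenvectorBasis]
  refine Finset.sum_congr rfl fun k _ => ?_
  have h1 : Matrix.toEuclideanLin A (hA.eigenvectorBasis k)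
      = (hA.eigenvalues k : ℂ) • (hA.eigenvectorBasis k : EuclideanSpace ℂ m) := by
    apply (WithLp.equiv 2 (m → ℂ)).injective
    simp only [Matrix.toEuclideanLin_apply]
    ext j
    have := congrFun (hA.mulVec_eigenvectorBasis k) j
    simpa using this
  have h2 : ⟪(hA.eigenvectorBasis k : EuclideanSpace ℂ m), Matrix.toEuclideanLin A v⟫_ℂ
      = (hA.eigenvalues k : ℂ) * ⟪hA.eigenvectorBasis k, v⟫_ℂ := by
    have hsym := (Matrix.isHermitian_iff_isSymmetric.1 hA)
    rw [← hsym (hA.eigenvectorBasis k) v, h1, inner_smul_left]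
    simp
  rw [h2, ← inner_conj_symm v (hA.eigenvectorBasis k), Complex.normSq_eq_conj_mul_self]
  ring

lemma re_inner_toEuclideanLin_expand {m : Type*} [Fintype m] [DecidableEq m]
    {A : Matrix m m ℂ} (hA : A.IsHermitian) (v : EuclideanSpace ℂ m) :
    (⟪v, Matrix.toEuclideanLin A v⟫_ℂ).re
      = ∑ k, hA.eigenvalues k * Complex.normSq ⟪hA.eigenvectorBasis k, v⟫_ℂ := by
  rw [inner_toEuclideanLin_expand hA v]
  rw [Complex.re_sum]
  exact Finset.sum_congr rfl fun k _ => by simp [← Complex.ofReal_mul]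

-- Parseval for a unit vector
lemma sum_normSq_inner_eq_one {m : Type*} [Fintype m] [DecidableEq m]
    (b : OrthonormalBasis m ℂ (EuclideanSpace ℂ m)) (v : EuclideanSpace ℂ m) (hv : ‖v‖ = 1) :
    ∑ k, Complex.normSq ⟪b k, v⟫_ℂ = 1 := by
  have h := b.sum_inner_mul_inner v v
  have h2 : ∀ k : m, ⟪v, b k⟫_ℂ * ⟪b k, v⟫_ℂ = (Complex.normSq ⟪b k, v⟫_ℂ : ℂ) := by
    intro k
    rw [← inner_conj_symm v (b k), Complex.normSq_eq_conj_mul_self]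
  rw [Finset.sum_congr rfl (fun k _ => h2 k)] at h
  have h3 : (⟪v, v⟫_ℂ) = (1 : ℂ) := by
    rw [inner_self_eq_norm_sq_to_K, hv]; norm_num
  rw [h3] at h
  have := congrArg Complex.re h
  rw [Complex.re_sum] at this
  simpa using this

-- Bessel
lemma sum_normSq_inner_le_one {m α : Type*} [Fintype m] [DecidableEq m]
    (w : EuclideanSpace ℂ m) (hw : ‖w‖ = 1) (F : Finset α)
    (v : α → EuclideanSpace ℂ m) (hv : Orthonormal ℂ v) :
    ∑ x ∈ F, Complex.normSq ⟪w, v x⟫_ℂ ≤ 1 := by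
  have h := hv.sum_inner_products_le (s := F) w
  rw [hw] at h
  calc ∑ x ∈ F, Complex.normSq ⟪w, v x⟫_ℂ
      = ∑ x ∈ F, ‖⟪v x, w⟫_ℂ‖ ^ 2 := by
        refine Finset.sum_congr rfl fun x _ => ?_
        rw [← norm_inner_symm, ← Complex.sq_norm]
    _ ≤ 1 ^ 2 := h
    _ = 1 := one_pow 2

/-- Key bound: the sum of quadratic forms of a Hermitian matrix over an orthonormal family,
when all eigenvalues except the one at `k0` are at most `b`, and the one at `k0` is at least
`b`. -/
lemma sum_re_inner_le {m α : Type*} [Fintype m] [DecidableEq m]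
    {A : Matrix m m ℂ} (hA : A.IsHermitian) {b : ℝ} (k0 : m)
    (hk0 : ∀ k, k ≠ k0 → hA.eigenvalues k ≤ b) (hab : b ≤ hA.eigenvalues k0)
    (F : Finset α) (v : α → EuclideanSpace ℂ m) (hv : Orthonormal ℂ v) :
    ∑ x ∈ F, (⟪v x, Matrix.toEuclideanLin A (v x)⟫_ℂ).re
      ≤ F.card * b + (hA.eigenvalues k0 - b) := by
  have hunit : ∀ x, ‖v x‖ = 1 := fun x => hv.1 x
  have expand : ∀ x, (⟪v x, Matrix.toEuclideanLin A (v x)⟫_ℂ).re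
      = b + ∑ k, (hA.eigenvalues k - b) * Complex.normSq ⟪hA.eigenvectorBasis k, v x⟫_ℂ := by
    intro x
    rw [re_inner_toEuclideanLin_expand hA (v x)]
    have hp := sum_normSq_inner_eq_one hA.eigenvectorBasis (v x) (hunit x)
    calc ∑ k, hA.eigenvalues k * Complex.normSq ⟪hA.eigenvectorBasis k, v x⟫_ℂ
        = ∑ k, (b * Complex.normSq ⟪hA.eigenvectorBasis k, v x⟫_ℂ
            + (hA.eigenvalues k - b) * Complex.normSq ⟪hA.eigenvectorBasis k, v x⟫_ℂ) := by
          refine Finset.sum_congr rfl fun k _ => ?_; ring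
      _ = b * (∑ k, Complex.normSq ⟪hA.eigenvectorBasis k, v x⟫_ℂ)
            + ∑ k, (hA.eigenvalues k - b) * Complex.normSq ⟪hA.eigenvectorBasis k, v x⟫_ℂ := by
          rw [Finset.sum_add_distrib, Finset.mul_sum]
      _ = b + ∑ k, (hA.eigenvalues k - b) * Complex.normSq ⟪hA.eigenvectorBasis k, v x⟫_ℂ := by
          rw [hp, mul_one]
  calc ∑ x ∈ F, (⟪v x, Matrix.toEuclideanLin A (v x)⟫_ℂ).re
      = ∑ x ∈ F, (b + ∑ k, (hA.eigenvalues k - b)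
          * Complex.normSq ⟪hA.eigenvectorBasis k, v x⟫_ℂ) := Finset.sum_congr rfl fun x _ => expand x
    _ = F.card * b + ∑ k, (hA.eigenvalues k - b)
          * ∑ x ∈ F, Complex.normSq ⟪hA.eigenvectorBasis k, v x⟫_ℂ := by
        rw [Finset.sum_add_distrib, Finset.sum_const, nsmul_eq_mul, Finset.sum_comm]
        congr 1
        refine Finset.sum_congr rfl fun k _ => ?_
        rw [Finset.mul_sum]
    _ ≤ F.card * b + (hA.eigenvalues k0 - b) := by
        gcongr _ + ?_
        calc ∑ k, (hA.eigenvalues k - b)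
              * ∑ x ∈ F, Complex.normSq ⟪hA.eigenvectorBasis k, v x⟫_ℂ
            ≤ ∑ k, (if k = k0 then hA.eigenvalues k0 - b else 0) := by
              refine Finset.sum_le_sum fun k _ => ?_
              by_cases hk : k = k0
              · subst hk
                rw [if_pos rfl]
                have h1 : ∑ x ∈ F, Complex.normSq ⟪hA.eigenvectorBasis k, v x⟫_ℂ ≤ 1 :=
                  sum_normSq_inner_le_one _ (hA.eigenvectorBasis.orthonormal.1 k) F v hv
                nlinarith [Finset.sum_nonneg (fun x (_ : x ∈ F) =>
                  Complex.normSq_nonneg ⟪hA.eigenvectorBasis k, v x⟫_ℂ), sub_nonneg.2 hab]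
              · simp only [if_neg hk]
                have h1 : hA.eigenvalues k - b ≤ 0 := sub_nonpos.2 (hk0 k hk)
                have h2 : (0:ℝ) ≤ ∑ x ∈ F, Complex.normSq ⟪hA.eigenvectorBasis k, v x⟫_ℂ :=
                  Finset.sum_nonneg fun x _ => Complex.normSq_nonneg _
                exact mul_nonpos_of_nonpos_of_nonneg h1 h2
          _ = hA.eigenvalues k0 - b := by simp

section lifts

variable {d1 d2 : ℕ}

/-- Embed a vector on the second factor into row `i`. -/
def lift1 (i : Fin d1) (e : EuclideanSpace ℂ (Fin d2)) : EuclideanSpace ℂ (Fin d1 × Fin d2) :=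
  WithLp.toLp 2 fun p : Fin d1 × Fin d2 => if p.1 = i then e p.2 else 0

/-- Embed a vector on the first factor into column `s`. -/
def lift2 (s : Fin d2) (f : EuclideanSpace ℂ (Fin d1)) : EuclideanSpace ℂ (Fin d1 × Fin d2) :=
  WithLp.toLp 2 fun p : Fin d1 × Fin d2 => if p.2 = s then f p.1 else 0

lemma inner_lift1 (i j : Fin d1) (e f : EuclideanSpace ℂ (Fin d2)) :
    ⟪lift1 i e, lift1 j f⟫_ℂ = if i = j then ⟪e, f⟫_ℂ else 0 := by
  simp only [PiLp.inner_apply, RCLike.inner_apply, lift1]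
  rw [Fintype.sum_prod_type]
  by_cases hij : i = j
  · subst hij
    rw [if_pos rfl, Finset.sum_eq_single i]
    · simp
    · intro k _ hk
      simp [hk]
    · simp
  · rw [if_neg hij, Finset.sum_eq_zero]
    intro k _
    rcases eq_or_ne k i with rfl | hki
    · simp [hij]
    · simp [hki]

lemma inner_lift2 (s t : Fin d2) (e f : EuclideanSpace ℂ (Fin d1)) :
    ⟪lift2 s e, lift2 t f⟫_ℂ = if s = t then ⟪e, f⟫_ℂ else 0 := by
  simp only [PiLp.inner_apply, RCLike.inner_apply, lift2]
  rw [Fintype.sum_prod_type_right]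
  by_cases hst : s = t
  · subst hst
    rw [if_pos rfl, Finset.sum_eq_single s]
    · simp
    · intro k _ hk
      simp [hk]
    · simp
  · rw [if_neg hst, Finset.sum_eq_zero]
    intro k _
    rcases eq_or_ne k s with rfl | hks
    · simp [hst]
    · simp [hks]

end lifts

lemma inner_toEuclideanLin_coord {m : Type*} [Fintype m] [DecidableEq m] (M : Matrix m m ℂ)
    (v : EuclideanSpace ℂ m) :
    ⟪v, Matrix.toEuclideanLin M v⟫_ℂ
      = ∑ p, ∑ q, (starRingEnd ℂ) (v p) * (M p q * v q) := by
  simp only [PiLp.inner_apply, RCLike.inner_apply, Matrix.toEuclideanLin_apply,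
    Matrix.mulVec, dotProduct, Finset.mul_sum]
  refine Finset.sum_congr rfl fun p _ => ?_
  rw [Finset.sum_mul]
  refine Finset.sum_congr rfl fun q _ => ?_
  ring

lemma sum_inner_lift1 {d1 d2 : ℕ} (C : Matrix (Fin d1 × Fin d2) (Fin d1 × Fin d2) ℂ)
    (e : EuclideanSpace ℂ (Fin d2)) :
    ∑ i : Fin d1, ⟪lift1 i e, Matrix.toEuclideanLin C (lift1 i e)⟫_ℂ
      = ⟪e, Matrix.toEuclideanLin (Matrix.of fun s t => ∑ i : Fin d1, C (i, s) (i, t)) e⟫_ℂ := by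
  have lhs : ∀ i : Fin d1, ⟪lift1 i e, Matrix.toEuclideanLin C (lift1 i e)⟫_ℂ
      = ∑ t, ∑ u, (starRingEnd ℂ) (e t) * (C (i, t) (i, u) * e u) := by
    intro i
    rw [inner_toEuclideanLin_coord]
    rw [Fintype.sum_prod_type]
    simp only [lift1, Fintype.sum_prod_type, apply_ite (starRingEnd ℂ), map_zero, ite_mul,
      zero_mul, mul_ite, mul_zero, Finset.sum_ite_irrel, Finset.sum_ite_eq', Finset.mem_univ,
      if_pos, Finset.sum_const_zero]
  rw [Fintype.sum_congr _ _ lhs, inner_toEuclideanLin_coord]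
  simp only [Matrix.of_apply, Finset.sum_mul, Finset.mul_sum]
  rw [Finset.sum_comm]
  refine Finset.sum_congr rfl fun t _ => Finset.sum_comm

lemma sum_inner_lift2 {d1 d2 : ℕ} (C : Matrix (Fin d1 × Fin d2) (Fin d1 × Fin d2) ℂ)
    (f : EuclideanSpace ℂ (Fin d1)) :
    ∑ s : Fin d2, ⟪lift2 s f, Matrix.toEuclideanLin C (lift2 s f)⟫_ℂ
      = ⟪f, Matrix.toEuclideanLin (Matrix.of fun i j => ∑ s : Fin d2, C (i, s) (j, s)) f⟫_ℂ := by
  have lhs : ∀ s : Fin d2, ⟪lift2 s f, Matrix.toEuclideanLin C (lift2 s f)⟫_ℂ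
      = ∑ i, ∑ j, (starRingEnd ℂ) (f i) * (C (i, s) (j, s) * f j) := by
    intro s
    rw [inner_toEuclideanLin_coord]
    rw [Fintype.sum_prod_type_right]
    simp only [lift2, Fintype.sum_prod_type_right, apply_ite (starRingEnd ℂ), map_zero, ite_mul,
      zero_mul, mul_ite, mul_zero, Finset.sum_ite_irrel, Finset.sum_ite_eq', Finset.mem_univ,
      if_pos, Finset.sum_const_zero]
  rw [Fintype.sum_congr _ _ lhs, inner_toEuclideanLin_coord]
  simp only [Matrix.of_apply, Finset.sum_mul, Finset.mul_sum]
  rw [Finset.sum_comm]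
  refine Finset.sum_congr rfl fun t _ => Finset.sum_comm

lemma orthonormal_lift1 {d1 d2 : ℕ} (e : Fin d2 → EuclideanSpace ℂ (Fin d2))
    (he : Orthonormal ℂ e) :
    Orthonormal ℂ (fun p : Fin d2 × Fin d1 => lift1 p.2 (e p.1)) := by
  rw [orthonormal_iff_ite]
  rintro ⟨s, i⟩ ⟨t, j⟩
  rw [inner_lift1]
  rw [orthonormal_iff_ite] at he
  by_cases hij : i = j
  · subst hij
    rw [if_pos rfl, he s t]
    by_cases hst : s = t
    · subst hst; simp
    · simp [hst, Prod.ext_iff]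
  · rw [if_neg hij]
    simp [Prod.ext_iff, hij]

lemma orthonormal_lift2 {d1 d2 : ℕ} (f : Fin d1 → EuclideanSpace ℂ (Fin d1))
    (hf : Orthonormal ℂ f) :
    Orthonormal ℂ (fun p : Fin d1 × Fin d2 => lift2 p.2 (f p.1)) := by
  rw [orthonormal_iff_ite]
  rintro ⟨i, s⟩ ⟨j, t⟩
  rw [inner_lift2]
  rw [orthonormal_iff_ite] at hf
  by_cases hst : s = t
  · subst hst
    rw [if_pos rfl, hf i j]
    by_cases hij : i = j
    · subst hij; simp
    · simp [hij, Prod.ext_iff]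
  · rw [if_neg hst]
    simp [Prod.ext_iff, hst]

lemma eigenvalue_eq_re_inner {m : Type*} [Fintype m] [DecidableEq m]
    {A : Matrix m m ℂ} (hA : A.IsHermitian) (i : m) :
    hA.eigenvalues i = (⟪hA.eigenvectorBasis i,
      Matrix.toEuclideanLin A (hA.eigenvectorBasis i)⟫_ℂ).re := by
  rw [hA.eigenvalues_eq i]
  rw [EuclideanSpace.inner_eq_star_dotProduct, dotProduct_comm]
  rfl

lemma sum_eigenvalues_eq_re_trace {m : Type*} [Fintype m] [DecidableEq m]
    {A : Matrix m m ℂ} (hA : A.IsHermitian) :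
    ∑ i, hA.eigenvalues i = A.trace.re := by
  have h : A.trace = ∑ i, (hA.eigenvalues i : ℂ) := by
    exact hA.trace_eq_sum_eigenvalues
  rw [h, Complex.re_sum]
  rfl

section Blocks

variable {d1 d2 : ℕ} {C : Matrix (Fin d1 × Fin d2) (Fin d1 × Fin d2) ℂ}

lemma block1_le (hC : C.IsHermitian) (htr1 : (ptrace1 C).IsHermitian)
    {b : ℝ} (k0 : Fin d1 × Fin d2) (hk0 : ∀ k, k ≠ k0 → hC.eigenvalues k ≤ b)
    (hab : b ≤ hC.eigenvalues k0) (A1 : Finset (Fin d2)) :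
    ∑ s ∈ A1, htr1.eigenvalues s ≤ (A1.card * d1 : ℕ) * b + (hC.eigenvalues k0 - b) := by
  have key : ∀ s, htr1.eigenvalues s
      = ∑ i : Fin d1, (⟪lift1 i (htr1.eigenvectorBasis s),
          Matrix.toEuclideanLin C (lift1 i (htr1.eigenvectorBasis s))⟫_ℂ).re := by
    intro s
    rw [eigenvalue_eq_re_inner htr1 s, ← Complex.re_sum, sum_inner_lift1 C]
    rfl
  calc ∑ s ∈ A1, htr1.eigenvalues s
      = ∑ p ∈ A1 ×ˢ (Finset.univ : Finset (Fin d1)),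
          (⟪lift1 p.2 (htr1.eigenvectorBasis p.1),
            Matrix.toEuclideanLin C (lift1 p.2 (htr1.eigenvectorBasis p.1))⟫_ℂ).re := by
        rw [Finset.sum_product]
        exact Finset.sum_congr rfl fun s _ => key s
    _ ≤ (A1 ×ˢ (Finset.univ : Finset (Fin d1))).card * b + (hC.eigenvalues k0 - b) :=
        sum_re_inner_le hC k0 hk0 hab _ _
          (orthonormal_lift1 _ (htr1.eigenvectorBasis).orthonormal)
    _ = (A1.card * d1 : ℕ) * b + (hC.eigenvalues k0 - b) := by
        rw [Finset.card_product, Finset.card_univ, Fintype.card_fin]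

lemma block2_le (hC : C.IsHermitian) (htr2 : (ptrace2 C).IsHermitian)
    {b : ℝ} (k0 : Fin d1 × Fin d2) (hk0 : ∀ k, k ≠ k0 → hC.eigenvalues k ≤ b)
    (hab : b ≤ hC.eigenvalues k0) (A2 : Finset (Fin d1)) :
    ∑ j ∈ A2, htr2.eigenvalues j ≤ (A2.card * d2 : ℕ) * b + (hC.eigenvalues k0 - b) := by
  have key : ∀ j, htr2.eigenvalues j
      = ∑ s : Fin d2, (⟪lift2 s (htr2.eigenvectorBasis j),
          Matrix.toEuclideanLin C (lift2 s (htr2.eigenvectorBasis j))⟫_ℂ).re := by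
    intro j
    rw [eigenvalue_eq_re_inner htr2 j, ← Complex.re_sum, sum_inner_lift2 C]
    rfl
  calc ∑ j ∈ A2, htr2.eigenvalues j
      = ∑ p ∈ A2 ×ˢ (Finset.univ : Finset (Fin d2)),
          (⟪lift2 p.2 (htr2.eigenvectorBasis p.1),
            Matrix.toEuclideanLin C (lift2 p.2 (htr2.eigenvectorBasis p.1))⟫_ℂ).re := by
        rw [Finset.sum_product]
        exact Finset.sum_congr rfl fun s _ => key s
    _ ≤ (A2 ×ˢ (Finset.univ : Finset (Fin d2))).card * b + (hC.eigenvalues k0 - b) :=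
        sum_re_inner_le hC k0 hk0 hab _ _
          (orthonormal_lift2 _ (htr2.eigenvectorBasis).orthonormal)
    _ = (A2.card * d2 : ℕ) * b + (hC.eigenvalues k0 - b) := by
        rw [Finset.card_product, Finset.card_univ, Fintype.card_fin]

lemma trace_ptrace1 : (ptrace1 C).trace = C.trace := by
  rw [Matrix.trace, Matrix.trace, Fintype.sum_prod_type]
  rw [Finset.sum_comm]
  rfl

lemma trace_ptrace2 : (ptrace2 C).trace = C.trace := by
  rw [Matrix.trace, Matrix.trace, Fintype.sum_prod_type]
  rfl

end Blocks

lemma sum_ind1 {α β : Type*} [Fintype α] [DecidableEq α] [DecidableEq β]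
    (B : Finset β) (i0 : α) (s0 : β) (z : ℝ) :
    ∑ s ∈ B, ∑ i : α, (if i = i0 ∧ s = s0 then z else 0) = if s0 ∈ B then z else 0 := by
  have h1 : ∀ s, ∑ i : α, (if i = i0 ∧ s = s0 then z else 0)
      = if s = s0 then z else 0 := by
    intro s
    simp only [ite_and]
    rw [Finset.sum_ite_eq' Finset.univ i0 (fun _ => if s = s0 then z else 0)]
    simp
  rw [Finset.sum_congr rfl fun s _ => h1 s,
    Finset.sum_ite_eq' B s0 (fun _ => z)]

lemma sum_ind2 {α β : Type*} [Fintype β] [DecidableEq α] [DecidableEq β]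
    (B : Finset α) (i0 : α) (s0 : β) (z : ℝ) :
    ∑ j ∈ B, ∑ s : β, (if j = i0 ∧ s = s0 then z else 0) = if i0 ∈ B then z else 0 := by
  have h1 : ∀ j, ∑ s : β, (if j = i0 ∧ s = s0 then z else 0)
      = if j = i0 then z else 0 := by
    intro j
    simp only [ite_and]
    by_cases hj : j = i0
    · subst hj
      simp [Finset.sum_ite_eq']
    · simp [hj]
  rw [Finset.sum_congr rfl fun s _ => h1 s,
    Finset.sum_ite_eq' B i0 (fun _ => z)]

set_option maxHeartbeats 1000000 in
theorem sufficient_case_different_dimensions (d1 d2 : ℕ) (hd1 : 2 ≤ d1) (hdd : d1 < d2)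
    (C : Matrix (Fin d1 × Fin d2) (Fin d1 × Fin d2) ℂ) (hC : C.IsHermitian)
    (htr1 : (ptrace1 C).IsHermitian) (htr2 : (ptrace2 C).IsHermitian)
    -- `μ` lists the eigenvalues of `C` in decreasing order
    (μ : Fin (d1 * d2) → ℝ) (hμ : Antitone μ)
    (g : Fin (d1 * d2) ≃ Fin d1 × Fin d2) (hg : ∀ k, μ k = hC.eigenvalues (g k))
    -- `λ_2 = λ_3 = … = λ_{d1·d2 - 1}` (`μ` is 0-indexed)
    (hmid : ∀ i j : Fin (d1 * d2), 1 ≤ (i : ℕ) → (i : ℕ) ≤ d1 * d2 - 2 →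
      1 ≤ (j : ℕ) → (j : ℕ) ≤ d1 * d2 - 2 → μ i = μ j) :
    Majorizes (Sum.elim htr1.eigenvalues htr2.eigenvalues)
      (Sum.elim (fun s : Fin d2 => ∑ i : Fin d1, μ (finProdFinEquiv (i, s)))
                (fun j : Fin d1 => ∑ s : Fin d2, μ (finProdFinEquiv (j, s)))) := by
  classical
  have hd2 : 3 ≤ d2 := by omega
  have hn6 : 6 ≤ d1 * d2 := by
    calc (6:ℕ) = 2 * 3 := rfl
    _ ≤ d1 * d2 := Nat.mul_le_mul hd1 hd2
  -- special indices
  obtain ⟨I0, hI0⟩ : ∃ x : Fin (d1 * d2), (x : ℕ) = 0 := ⟨⟨0, by omega⟩, rfl⟩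
  obtain ⟨I1, hI1⟩ : ∃ x : Fin (d1 * d2), (x : ℕ) = 1 := ⟨⟨1, by omega⟩, rfl⟩
  obtain ⟨IL, hIL⟩ : ∃ x : Fin (d1 * d2), (x : ℕ) = d1 * d2 - 1 := ⟨⟨d1 * d2 - 1, by omega⟩, rfl⟩
  obtain ⟨i00, hi00⟩ : ∃ x : Fin d1, (x : ℕ) = 0 := ⟨⟨0, by omega⟩, rfl⟩
  obtain ⟨s00, hs00⟩ : ∃ x : Fin d2, (x : ℕ) = 0 := ⟨⟨0, by omega⟩, rfl⟩
  obtain ⟨iL0, hiL0⟩ : ∃ x : Fin d1, (x : ℕ) = d1 - 1 := ⟨⟨d1 - 1, by omega⟩, rfl⟩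
  obtain ⟨sL0, hsL0⟩ : ∃ x : Fin d2, (x : ℕ) = d2 - 1 := ⟨⟨d2 - 1, by omega⟩, rfl⟩
  obtain ⟨a, ha⟩ : ∃ x : ℝ, x = μ I0 := ⟨_, rfl⟩
  obtain ⟨b, hb⟩ : ∃ x : ℝ, x = μ I1 := ⟨_, rfl⟩
  obtain ⟨c, hc⟩ : ∃ x : ℝ, x = μ IL := ⟨_, rfl⟩
  -- structure of μ
  have hmu : ∀ k : Fin (d1 * d2), μ k
      = b + (if k = I0 then a - b else 0) + (if k = IL then c - b else 0) := by
    intro k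
    by_cases h0 : k = I0
    · rw [h0, if_pos rfl, if_neg (fun h => by rw [Fin.ext_iff, hI0, hIL] at h; omega), ← ha]
      ring
    · by_cases hL : k = IL
      · rw [hL, if_neg (fun h => by rw [Fin.ext_iff, hI0, hIL] at h; omega), if_pos rfl, ← hc]
        ring
      · rw [if_neg h0, if_neg hL]
        have hk0 : (k : ℕ) ≠ 0 := fun h => h0 (Fin.ext (by omega))
        have hkL : (k : ℕ) ≠ d1 * d2 - 1 := fun h => hL (Fin.ext (by omega))
        have hkval : (k : ℕ) < d1 * d2 := k.2
        have hmide : μ k = μ I1 := hmid k I1 (by omega) (by omega) (by omega) (by omega)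
        rw [hmide, ← hb]
        ring
  -- equation for the special positions of finProdFinEquiv
  have hP0 : finProdFinEquiv (i00, s00) = I0 := by
    apply Fin.ext
    simp only [finProdFinEquiv_apply_val]
    rw [hi00, hs00, hI0]
    simp
  have hPL : finProdFinEquiv (iL0, sL0) = IL := by
    apply Fin.ext
    have h1 : (1:ℕ) ≤ d1 := by omega
    have h2 : (1:ℕ) ≤ d2 := by omega
    have h3 : (1:ℕ) ≤ d1 * d2 := by omega
    simp only [finProdFinEquiv_apply_val]
    rw [hiL0, hsL0, hIL]
    zify [h1, h2, h3]
    ring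
  have hcond0 : ∀ (i : Fin d1) (s : Fin d2),
      (finProdFinEquiv (i, s) = I0) ↔ (i = i00 ∧ s = s00) := by
    intro i s
    rw [← hP0, Equiv.apply_eq_iff_eq, Prod.mk.injEq]
  have hcondL : ∀ (i : Fin d1) (s : Fin d2),
      (finProdFinEquiv (i, s) = IL) ↔ (i = iL0 ∧ s = sL0) := by
    intro i s
    rw [← hPL, Equiv.apply_eq_iff_eq, Prod.mk.injEq]
  have hmu' : ∀ (i : Fin d1) (s : Fin d2), μ (finProdFinEquiv (i, s))
      = b + (if i = i00 ∧ s = s00 then a - b else 0)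
          + (if i = iL0 ∧ s = sL0 then c - b else 0) := by
    intro i s
    rw [hmu, if_congr (hcond0 i s) rfl rfl, if_congr (hcondL i s) rfl rfl]
  -- evaluation of partial sums on the RHS
  have hY1 : ∀ B1 : Finset (Fin d2),
      ∑ s ∈ B1, ∑ i : Fin d1, μ (finProdFinEquiv (i, s))
        = (B1.card * d1 : ℕ) * b + (if s00 ∈ B1 then a - b else 0)
            + (if sL0 ∈ B1 then c - b else 0) := by
    intro B1
    rw [Finset.sum_congr rfl fun s _ => Finset.sum_congr rfl fun i _ => hmu' i s]
    simp only [Finset.sum_add_distrib]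
    rw [sum_ind1 B1 i00 s00 (a - b), sum_ind1 B1 iL0 sL0 (c - b)]
    simp [Finset.sum_const, mul_comm, mul_assoc]
  have hY2 : ∀ B2 : Finset (Fin d1),
      ∑ j ∈ B2, ∑ s : Fin d2, μ (finProdFinEquiv (j, s))
        = (B2.card * d2 : ℕ) * b + (if i00 ∈ B2 then a - b else 0)
            + (if iL0 ∈ B2 then c - b else 0) := by
    intro B2
    rw [Finset.sum_congr rfl fun j _ => Finset.sum_congr rfl fun s _ => hmu' j s]
    simp only [Finset.sum_add_distrib]
    rw [sum_ind2 B2 i00 s00 (a - b), sum_ind2 B2 iL0 sL0 (c - b)]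
    simp [Finset.sum_const, mul_comm, mul_assoc]
  -- total sum of μ
  have hsum_mu : ∑ k, μ k = (d1 * d2 : ℕ) * b + (a - b) + (c - b) := by
    rw [Finset.sum_congr rfl fun k _ => hmu k]
    simp only [Finset.sum_add_distrib]
    rw [Finset.sum_ite_eq' Finset.univ I0 (fun _ => a - b),
      Finset.sum_ite_eq' Finset.univ IL (fun _ => c - b)]
    simp [mul_comm]
  -- trace identities
  have htr_mu : C.trace.re = ∑ k, μ k := by
    rw [← sum_eigenvalues_eq_re_trace hC, ← Equiv.sum_comp g hC.eigenvalues]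
    exact (Finset.sum_congr rfl fun k _ => (hg k)).symm
  have hx1_full : ∑ s, htr1.eigenvalues s = ∑ k, μ k := by
    rw [sum_eigenvalues_eq_re_trace htr1, trace_ptrace1, htr_mu]
  have hx2_full : ∑ j, htr2.eigenvalues j = ∑ k, μ k := by
    rw [sum_eigenvalues_eq_re_trace htr2, trace_ptrace2, htr_mu]
  -- eigenvalue hypotheses for the key bound
  have heig0 : hC.eigenvalues (g I0) = a := by rw [ha, hg I0]
  have hk0 : ∀ k, k ≠ g I0 → hC.eigenvalues k ≤ b := by
    intro k hk
    have h1 : hC.eigenvalues k = μ (g.symm k) := by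
      rw [hg (g.symm k), Equiv.apply_symm_apply]
    rw [h1, hb]
    apply hμ
    have h2 : g.symm k ≠ I0 := fun h => hk (by rw [← h, Equiv.apply_symm_apply])
    have h3 : (g.symm k : ℕ) ≠ 0 := fun h => h2 (Fin.ext (by omega))
    rw [Fin.le_def]
    omega
  have hab : b ≤ hC.eigenvalues (g I0) := by
    rw [heig0, ha, hb]
    exact hμ (by rw [Fin.le_def]; omega)
  -- per-block bounds for the LHS
  have hR1 : ∀ A1 : Finset (Fin d2), ∑ s ∈ A1, htr1.eigenvalues s
      ≤ (A1.card * d1 : ℕ) * b + (if 1 ≤ A1.card then a - b else 0)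
          + (if A1.card = d2 then c - b else 0) := by
    intro A1
    rcases Nat.eq_zero_or_pos A1.card with h0 | hpos
    · have hA1 : A1 = ∅ := Finset.card_eq_zero.1 h0
      rw [hA1, Finset.sum_empty, Finset.card_empty,
        if_neg (by omega : ¬ (1:ℕ) ≤ 0), if_neg (by omega : ¬ (0:ℕ) = d2)]
      simp
    · by_cases hfull : A1.card = d2
      · have hA1 : A1 = Finset.univ := Finset.eq_univ_of_card A1 (by simpa using hfull)
        rw [if_pos (Nat.one_le_iff_ne_zero.2 (by omega)), if_pos hfull, hfull, hA1,
          hx1_full, hsum_mu]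
        exact le_of_eq (by first | (push_cast; ring) | push_cast | rfl)
      · calc ∑ s ∈ A1, htr1.eigenvalues s
            ≤ (A1.card * d1 : ℕ) * b + (hC.eigenvalues (g I0) - b) :=
              block1_le hC htr1 (g I0) hk0 hab A1
          _ = (A1.card * d1 : ℕ) * b + (if 1 ≤ A1.card then a - b else 0)
              + (if A1.card = d2 then c - b else 0) := by
            rw [heig0, if_pos (Nat.one_le_iff_ne_zero.2 (by omega)), if_neg hfull, add_zero]
  have hR2 : ∀ A2 : Finset (Fin d1), ∑ j ∈ A2, htr2.eigenvalues j
      ≤ (A2.card * d2 : ℕ) * b + (if 1 ≤ A2.card then a - b else 0)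
          + (if A2.card = d1 then c - b else 0) := by
    intro A2
    rcases Nat.eq_zero_or_pos A2.card with h0 | hpos
    · have hA2 : A2 = ∅ := Finset.card_eq_zero.1 h0
      rw [hA2, Finset.sum_empty, Finset.card_empty,
        if_neg (by omega : ¬ (1:ℕ) ≤ 0), if_neg (by omega : ¬ (0:ℕ) = d1)]
      simp
    · by_cases hfull : A2.card = d1
      · have hA2 : A2 = Finset.univ := Finset.eq_univ_of_card A2 (by simpa using hfull)
        rw [if_pos (Nat.one_le_iff_ne_zero.2 (by omega)), if_pos hfull, hfull, hA2,
          hx2_full, hsum_mu]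
      · calc ∑ j ∈ A2, htr2.eigenvalues j
            ≤ (A2.card * d2 : ℕ) * b + (hC.eigenvalues (g I0) - b) :=
              block2_le hC htr2 (g I0) hk0 hab A2
          _ = (A2.card * d2 : ℕ) * b + (if 1 ≤ A2.card then a - b else 0)
              + (if A2.card = d1 then c - b else 0) := by
            rw [heig0, if_pos (Nat.one_le_iff_ne_zero.2 (by omega)), if_neg hfull, add_zero]
  -- candidate subsets on the RHS
  have hBc1 : ∀ p : ℕ, p ≤ d2 → ∃ B1 : Finset (Fin d2), B1.card = p ∧
      ∑ s ∈ B1, ∑ i : Fin d1, μ (finProdFinEquiv (i, s))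
        = (p * d1 : ℕ) * b + (if 1 ≤ p then a - b else 0) + (if p = d2 then c - b else 0) := by
    intro p hp
    refine ⟨(Finset.range p).attachFin (fun m hm => lt_of_lt_of_le (Finset.mem_range.1 hm) hp),
      by rw [Finset.card_attachFin, Finset.card_range], ?_⟩
    rw [hY1, Finset.card_attachFin, Finset.card_range]
    congr 1
    · congr 1
      refine if_congr ?_ rfl rfl
      rw [Finset.mem_attachFin, Finset.mem_range]
      omega
    · refine if_congr ?_ rfl rfl
      rw [Finset.mem_attachFin, Finset.mem_range]
      omega
  have hBc2 : ∀ q : ℕ, q ≤ d1 → ∃ B2 : Finset (Fin d1), B2.card = q ∧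
      ∑ j ∈ B2, ∑ s : Fin d2, μ (finProdFinEquiv (j, s))
        = (q * d2 : ℕ) * b + (if 1 ≤ q then a - b else 0) + (if q = d1 then c - b else 0) := by
    intro q hq
    refine ⟨(Finset.range q).attachFin (fun m hm => lt_of_lt_of_le (Finset.mem_range.1 hm) hq),
      by rw [Finset.card_attachFin, Finset.card_range], ?_⟩
    rw [hY2, Finset.card_attachFin, Finset.card_range]
    congr 1
    · congr 1
      refine if_congr ?_ rfl rfl
      rw [Finset.mem_attachFin, Finset.mem_range]
      omega
    · refine if_congr ?_ rfl rfl
      rw [Finset.mem_attachFin, Finset.mem_range]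
      omega
  constructor
  · -- weak majorization
    intro k
    by_cases hk : k ≤ d2 + d1
    · apply maxSum_le _ (by simpa using hk)
      intro A hA
      set A1 := A.toLeft with hA1
      set A2 := A.toRight with hA2
      have hp : A1.card ≤ d2 := le_trans (Finset.card_le_univ A1) (by simp)
      have hq : A2.card ≤ d1 := le_trans (Finset.card_le_univ A2) (by simp)
      have hpq : A1.card + A2.card = k := by
        rw [hA1, hA2, Finset.card_toLeft_add_card_toRight, hA]
      obtain ⟨B1, hB1card, hB1⟩ := hBc1 A1.card hp
      obtain ⟨B2, hB2card, hB2⟩ := hBc2 A2.card hq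
      have hsplit : ∑ i ∈ A, Sum.elim htr1.eigenvalues htr2.eigenvalues i
          = ∑ s ∈ A1, htr1.eigenvalues s + ∑ j ∈ A2, htr2.eigenvalues j := by
        conv_lhs => rw [← Finset.toLeft_disjSum_toRight (u := A)]
        rw [Finset.sum_disjSum]
        rfl
      have hy : ∑ i ∈ B1.disjSum B2,
          Sum.elim (fun s : Fin d2 => ∑ i : Fin d1, μ (finProdFinEquiv (i, s)))
            (fun j : Fin d1 => ∑ s : Fin d2, μ (finProdFinEquiv (j, s))) i
          = (A1.card * d1 : ℕ) * b + (if 1 ≤ A1.card then a - b else 0)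
              + (if A1.card = d2 then c - b else 0)
            + ((A2.card * d2 : ℕ) * b + (if 1 ≤ A2.card then a - b else 0)
              + (if A2.card = d1 then c - b else 0)) := by
        rw [Finset.sum_disjSum]
        simp only [Sum.elim_inl, Sum.elim_inr]
        rw [hB1, hB2]
      calc ∑ i ∈ A, Sum.elim htr1.eigenvalues htr2.eigenvalues i
          ≤ (A1.card * d1 : ℕ) * b + (if 1 ≤ A1.card then a - b else 0)
              + (if A1.card = d2 then c - b else 0)
            + ((A2.card * d2 : ℕ) * b + (if 1 ≤ A2.card then a - b else 0)
              + (if A2.card = d1 then c - b else 0)) := by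
            rw [hsplit]
            exact add_le_add (hR1 A1) (hR2 A2)
        _ = ∑ i ∈ B1.disjSum B2,
            Sum.elim (fun s : Fin d2 => ∑ i : Fin d1, μ (finProdFinEquiv (i, s)))
              (fun j : Fin d1 => ∑ s : Fin d2, μ (finProdFinEquiv (j, s))) i := hy.symm
        _ ≤ maxSum (Sum.elim (fun s : Fin d2 => ∑ i : Fin d1, μ (finProdFinEquiv (i, s)))
              (fun j : Fin d1 => ∑ s : Fin d2, μ (finProdFinEquiv (j, s)))) k := by
            have := le_maxSum (Sum.elim (fun s : Fin d2 => ∑ i : Fin d1, μ (finProdFinEquiv (i, s)))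
              (fun j : Fin d1 => ∑ s : Fin d2, μ (finProdFinEquiv (j, s)))) (B1.disjSum B2)
            rwa [Finset.card_disjSum, hB1card, hB2card, hpq] at this
    · rw [maxSum_of_card_lt _ (by simpa using Nat.lt_of_not_le hk),
        maxSum_of_card_lt _ (by simpa using Nat.lt_of_not_le hk)]
  · -- equal total sums
    rw [Fintype.sum_sum_type, Fintype.sum_sum_type]
    simp only [Sum.elim_inl, Sum.elim_inr]
    have h1 : ∑ s : Fin d2, ∑ i : Fin d1, μ (finProdFinEquiv (i, s)) = ∑ k, μ k := by
      rw [← Equiv.sum_comp finProdFinEquiv μ, Fintype.sum_prod_type_right]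
    have h2 : ∑ j : Fin d1, ∑ s : Fin d2, μ (finProdFinEquiv (j, s)) = ∑ k, μ k := by
      rw [← Equiv.sum_comp finProdFinEquiv μ, Fintype.sum_prod_type]
    rw [h1, h2, hx1_full, hx2_full]
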